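/- Let γ: ℝ → ℝ^3 be the rational normal curve γ(t) = (6t^2 - 1, (7/2)t^3 + (3/2)t, -(1/2)t^3 + (3/2)t), and for s ∈ ℝ let ℓ(s) denote the tangent line {γ(s) + r·γ'(s) : r ∈ ℝ}. Then for every s with 0 < s < 1, the tangent line ℓ(s) meets the quadric Q = {(x,y,z) ∈ ℝ^3 : x^2 - y^2 + z^2 = 1} in exactly two distinct real points; that is, the equation q(γ(s) + r·γ'(s)) = 1, where q(x,y,z) = x^2 - y^2 + z^2, has exactly two distinct real solutions r. -/

import Mathlib

/-- For the rational normal cubic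
`γ(t) = (6t² - 1, (7/2)t³ + (3/2)t, -(1/2)t³ + (3/2)t)` and `0 < s < 1`, the
tangent line `ℓ(s) = {γ(s) + r·γ'(s)}` meets the quadric
`Q = {x² - y² + z² = 1}` in exactly two distinct real points; that is, the
equation `q(γ(s) + r·γ'(s)) = 1` has exactly two distinct real solutions `r`. -/
theorem tangent_line_meets_quadric_twice (γ : ℝ → ℝ × ℝ × ℝ)
    (hγ : ∀ t : ℝ, γ t =
      (6 * t ^ 2 - 1, 7 / 2 * t ^ 3 + 3 / 2 * t, -(1 / 2) * t ^ 3 + 3 / 2 * t))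
    (q : ℝ × ℝ × ℝ → ℝ) (hq : ∀ p : ℝ × ℝ × ℝ, q p = p.1 ^ 2 - p.2.1 ^ 2 + p.2.2 ^ 2) :
    ∀ s : ℝ, 0 < s → s < 1 →
      ∃ r₁ r₂ : ℝ, r₁ ≠ r₂ ∧
        ∀ r : ℝ, q (γ s + r • deriv γ s) = 1 ↔ r = r₁ ∨ r = r₂ := by
  intro s hs0 hs1
  have hγfun : γ = fun t : ℝ =>
      ((6 * t ^ 2 - 1, 7 / 2 * t ^ 3 + 3 / 2 * t, -(1 / 2) * t ^ 3 + 3 / 2 * t) : ℝ × ℝ × ℝ) :=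
    funext hγ
  -- compute the derivative
  have h1 : HasDerivAt (fun t : ℝ => 6 * t ^ 2 - 1) (12 * s) s := by
    have := ((hasDerivAt_pow 2 s).const_mul (6 : ℝ)).sub_const 1
    refine this.congr_deriv ?_
    push_cast; ring
  have h2 : HasDerivAt (fun t : ℝ => 7 / 2 * t ^ 3 + 3 / 2 * t)
      (21 / 2 * s ^ 2 + 3 / 2) s := by
    have := ((hasDerivAt_pow 3 s).const_mul ((7 : ℝ) / 2)).add
      ((hasDerivAt_id s).const_mul ((3 : ℝ) / 2))
    refine this.congr_deriv ?_
    push_cast; ring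
  have h3 : HasDerivAt (fun t : ℝ => -(1 / 2) * t ^ 3 + 3 / 2 * t)
      (-(3 / 2) * s ^ 2 + 3 / 2) s := by
    have := ((hasDerivAt_pow 3 s).const_mul (-((1 : ℝ) / 2))).add
      ((hasDerivAt_id s).const_mul ((3 : ℝ) / 2))
    refine this.congr_deriv ?_
    push_cast; ring
  have hd : HasDerivAt γ
      ((12 * s, 21 / 2 * s ^ 2 + 3 / 2, -(3 / 2) * s ^ 2 + 3 / 2) : ℝ × ℝ × ℝ) s := by
    rw [hγfun]
    exact h1.prodMk (h2.prodMk h3)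
  have hderiv : deriv γ s =
      ((12 * s, 21 / 2 * s ^ 2 + 3 / 2, -(3 / 2) * s ^ 2 + 3 / 2) : ℝ × ℝ × ℝ) := hd.deriv
  -- quadratic data
  have hwnn : (0 : ℝ) ≤ 3 * s ^ 2 + 1 := by nlinarith
  set w : ℝ := Real.sqrt (3 * s ^ 2 + 1) with hwdef
  have hwpos : 0 < w := Real.sqrt_pos.mpr (by nlinarith)
  have hw : w ^ 2 = 3 * s ^ 2 + 1 := Real.sq_sqrt hwnn
  have hs2 : 0 < 1 - s ^ 2 := by nlinarith
  set a : ℝ := 108 * s ^ 2 * (1 - s ^ 2) with hadef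
  set b : ℝ := -72 * s ^ 5 + 96 * s ^ 3 - 24 * s with hbdef
  set c : ℝ := -12 * s ^ 6 + 24 * s ^ 4 - 12 * s ^ 2 with hcdef
  set e : ℝ := 24 * s * (1 - s ^ 2) * w with hedef
  have hapos : 0 < a := by positivity
  have hepos : 0 < e := by positivity
  have he : e ^ 2 = b ^ 2 - 4 * a * c := by
    rw [hedef, hadef, hbdef, hcdef]
    linear_combination (576 * s ^ 2 * (1 - s ^ 2) ^ 2) * hw
  have h2a : (2 * a) ≠ 0 := by positivity
  refine ⟨(-b + e) / (2 * a), (-b - e) / (2 * a), ?_, ?_⟩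
  · intro h
    rw [div_eq_div_iff h2a h2a] at h
    have := mul_right_cancel₀ h2a h
    linarith
  · intro r
    have hquad : q (γ s + r • deriv γ s) - 1 = a * r ^ 2 + b * r + c := by
      rw [hderiv, hγ s, hq]
      simp only [Prod.mk_add_mk, Prod.smul_mk, smul_eq_mul]
      rw [hadef, hbdef, hcdef]
      ring
    constructor
    · intro h
      have hz : a * r ^ 2 + b * r + c = 0 := by rw [← hquad, h]; ring
      have hfac0 : (2 * a * r + b - e) * (2 * a * r + b + e) = 0 := by
        linear_combination (4 * a) * hz - he
      rcases mul_eq_zero.mp hfac0 with h' | h'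
      · left
        field_simp
        linear_combination h'
      · right
        field_simp
        linear_combination h'
    · intro h
      have hz : a * r ^ 2 + b * r + c = 0 := by
        have h4 : (4 * a) * (a * r ^ 2 + b * r + c) = 0 := by
          rcases h with h | h
          · have hu : 2 * a * r + b - e = 0 := by rw [h]; field_simp; ring
            linear_combination (2 * a * r + b + e) * hu + he
          · have hu : 2 * a * r + b + e = 0 := by rw [h]; field_simp; ring
            linear_combination (2 * a * r + b - e) * hu + he
        have h4a : (4 * a) ≠ 0 := by positivity
        exact (mul_eq_zero.mp h4).resolve_left h4a
      have := hquad
      rw [hz] at this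
      linarith
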